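/- Let x ~ N(0, I_d), β̄ = (β_0, β^⊤) with β = (γ_0, 0,…,0), let y ∈ {-1,1} satisfy P(y = 1 | x) = Φ(β_0 + γ_0 x_1), and let x̄ = (1, x^⊤)^⊤. Then for every unit vector u ∈ S^d, P(y⟨x̄,u⟩ ≤ 0) ≥ E[Φ(-|β_0 + γ_0 Z|)] where Z ~ N(0,1). -/
import Mathlib

open MeasureTheory Filter

noncomputable def phi (z : ℝ) : ℝ := (Real.sqrt (2 * Real.pi))⁻¹ * Real.exp (-z ^ 2 / 2)
noncomputable def Phi (z : ℝ) : ℝ := ∫ t in Set.Iic z, phi t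
noncomputable def psi (z : ℝ) : ℝ := (phi z / Phi z) * (z + phi z / Phi z)

lemma phi_nonneg (z : ℝ) : 0 ≤ phi z :=
  mul_nonneg (inv_nonneg.2 (Real.sqrt_nonneg _)) (Real.exp_pos _).le

lemma integrable_phi : Integrable phi := by
  have h := integrable_exp_neg_mul_sq (by norm_num : (0:ℝ) < 1/2)
  have e : phi = fun z => (Real.sqrt (2*Real.pi))⁻¹ * Real.exp (-(1/2) * z^2) := by
    funext z; unfold phi; ring_nf
  rw [e]; exact h.const_mul _

lemma integral_phi : ∫ z, phi z = 1 := by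
  unfold phi
  rw [MeasureTheory.integral_const_mul]
  have e : (fun z : ℝ => Real.exp (-z^2/2)) = fun z => Real.exp (-(1/2) * z^2) := by
    funext z; ring_nf
  rw [e, integral_gaussian]
  have h2 : Real.pi / (1/2) = 2 * Real.pi := by ring
  rw [h2]
  exact inv_mul_cancel₀ (Real.sqrt_ne_zero'.2 (by positivity))

lemma Phi_nonneg (z : ℝ) : 0 ≤ Phi z :=
  setIntegral_nonneg measurableSet_Iic fun t _ => phi_nonneg t

lemma Phi_mono : Monotone Phi := fun a b hab =>
  setIntegral_mono_set integrable_phi.integrableOn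
    (ae_restrict_of_ae (Eventually.of_forall phi_nonneg))
    (HasSubset.Subset.eventuallyLE (Set.Iic_subset_Iic.2 hab))

lemma Phi_le_one (z : ℝ) : Phi z ≤ 1 := by
  rw [← integral_phi]
  exact setIntegral_le_integral integrable_phi (Eventually.of_forall phi_nonneg)

lemma Phi_neg (z : ℝ) : Phi (-z) = 1 - Phi z := by
  have h1 : Phi (-z) = ∫ x in Set.Ioi z, phi x := by
    have := integral_comp_neg_Iic (-z) phi
    simp only [neg_neg] at this
    rw [← this]
    unfold Phi
    refine setIntegral_congr_fun measurableSet_Iic fun t _ => ?_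
    unfold phi; rw [neg_sq]
  have h2 : Phi z + ∫ x in Set.Ioi z, phi x = 1 := by
    rw [← integral_phi, ← integral_add_compl (measurableSet_Iic (a := z)) integrable_phi,
      Set.compl_Iic]
    rfl
  linarith

open ProbabilityTheory in
theorem stmt17 {Ω : Type*} [MeasureSpace Ω] [IsProbabilityMeasure (ℙ : Measure Ω)]
    {d : ℕ} (hd : 0 < d)
    (x : Ω → (Fin d → ℝ)) (hx : Measurable x)
    (hlaw : Measure.map x ℙ = Measure.pi fun _ : Fin d => gaussianReal 0 1)
    (y : Ω → ℝ) (hy : Measurable y) (hyval : ∀ ω, y ω = 1 ∨ y ω = -1)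
    (β0 γ0 : ℝ)
    (hcond :
      (ℙ[fun ω => ({ω' | y ω' = 1} : Set Ω).indicator (fun _ => (1 : ℝ)) ω |
          MeasurableSpace.comap x inferInstance]) =ᵐ[ℙ]
        fun ω => Phi (β0 + γ0 * x ω ⟨0, hd⟩))
    (u : Fin (d + 1) → ℝ) (hu : ∑ i, (u i) ^ 2 = 1) :
    (ℙ {ω | y ω * (u 0 + ∑ j : Fin d, u j.succ * x ω j) ≤ 0}).toReal ≥
      ∫ ω, Phi (-|β0 + γ0 * x ω ⟨0, hd⟩|) ∂ℙ := by
  classical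
  have hm : MeasurableSpace.comap x inferInstance ≤ (inferInstance : MeasurableSpace Ω) :=
    hx.comap_le
  set t : Ω → ℝ := fun ω => β0 + γ0 * x ω ⟨0, hd⟩ with ht_def
  have ht_meas : Measurable t :=
    measurable_const.add (measurable_const.mul ((measurable_pi_apply _).comp hx))
  set f : Ω → ℝ := fun ω => ({ω' | y ω' = 1} : Set Ω).indicator (fun _ => (1:ℝ)) ω with hf_def
  have hyset : MeasurableSet {ω' | y ω' = 1} := hy (measurableSet_singleton 1)
  have hf_int : Integrable f ℙ := (integrable_const (1:ℝ)).indicator hyset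
  set F : (Fin d → ℝ) → ℝ := fun w => u 0 + ∑ j : Fin d, u j.succ * w j with hF_def
  have hF : Measurable F := by
    apply measurable_const.add
    exact Finset.measurable_sum _ fun j _ => measurable_const.mul (measurable_pi_apply j)
  set S : Ω → ℝ := fun ω => u 0 + ∑ j : Fin d, u j.succ * x ω j with hS_def
  have hSF : S = F ∘ x := rfl
  have hS_meas : Measurable S := hF.comp hx
  set P : Set Ω := {ω | 0 < S ω} with hP_def
  set N : Set Ω := {ω | S ω < 0} with hN_def
  set Z0 : Set Ω := {ω | S ω = 0} with hZ0_def
  have hP_m : MeasurableSet[MeasurableSpace.comap x inferInstance] P := ⟨F ⁻¹' Set.Ioi 0, hF measurableSet_Ioi, rfl⟩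
  have hN_m : MeasurableSet[MeasurableSpace.comap x inferInstance] N := ⟨F ⁻¹' Set.Iio 0, hF measurableSet_Iio, rfl⟩
  have hZ0_m : MeasurableSet[MeasurableSpace.comap x inferInstance] Z0 := ⟨F ⁻¹' {0}, hF (measurableSet_singleton 0), rfl⟩
  have hP : MeasurableSet P := hm _ hP_m
  have hN : MeasurableSet N := hm _ hN_m
  have hZ0 : MeasurableSet Z0 := hm _ hZ0_m
  -- integrands
  set Φt : Ω → ℝ := fun ω => Phi (t ω) with hΦt_def
  set g : Ω → ℝ := fun ω => Phi (-|t ω|) with hg_def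
  have hΦt_meas : Measurable Φt := Phi_mono.measurable.comp ht_meas
  have hg_meas : Measurable g := Phi_mono.measurable.comp (ht_meas.abs.neg)
  have bound_int : ∀ (h : Ω → ℝ), Measurable h → (∀ ω, 0 ≤ h ω) → (∀ ω, h ω ≤ 1) →
      Integrable h ℙ := by
    intro h hmeas h0 h1
    refine (integrable_const (1:ℝ)).mono' hmeas.aestronglyMeasurable ?_
    exact Eventually.of_forall fun ω => by
      rw [Real.norm_eq_abs, abs_of_nonneg (h0 ω)]; exact h1 ω
  have hΦt_int : Integrable Φt ℙ :=
    bound_int _ hΦt_meas (fun ω => Phi_nonneg _) (fun ω => Phi_le_one _)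
  have hg_int : Integrable g ℙ :=
    bound_int _ hg_meas (fun ω => Phi_nonneg _) (fun ω => Phi_le_one _)
  set A : Set Ω := {ω | y ω * S ω ≤ 0} with hA_def
  have hA : MeasurableSet A := measurableSet_le (hy.mul hS_meas) measurable_const
  set χ : Ω → ℝ := A.indicator 1 with hχ_def
  have hχ_int : Integrable χ ℙ := (integrable_const (1:ℝ)).indicator hA
  -- condexp key
  have key : ∀ s : Set Ω, MeasurableSet[MeasurableSpace.comap x inferInstance] s →
      ∫ ω in s, f ω ∂ℙ = ∫ ω in s, Φt ω ∂ℙ := by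
    intro s hs
    rw [← setIntegral_condExp hm hf_int hs]
    exact setIntegral_congr_ae (hm _ hs) (hcond.mono fun ω hω _ => hω)
  -- pointwise identities for χ on each piece
  have hχP : ∀ ω ∈ P, χ ω = 1 - f ω := by
    intro ω hω
    have hSpos : 0 < S ω := hω
    rcases hyval ω with h1 | h1
    · have hnot : ω ∉ A := by
        intro hmem
        have hmem' : y ω * S ω ≤ 0 := hmem
        rw [h1, one_mul] at hmem'
        exact absurd hmem' (not_le.2 hSpos)
      have hfω : f ω = 1 := Set.indicator_of_mem (show ω ∈ {ω' | y ω' = 1} from h1) _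
      have hχω : χ ω = 0 := Set.indicator_of_notMem hnot _
      rw [hχω, hfω]; ring
    · have hyne : y ω ≠ 1 := by rw [h1]; norm_num
      have hmem : ω ∈ A := show y ω * S ω ≤ 0 by rw [h1]; nlinarith
      have hfω : f ω = 0 := Set.indicator_of_notMem (show ω ∉ {ω' | y ω' = 1} from hyne) _
      have hχω : χ ω = 1 := Set.indicator_of_mem hmem _
      rw [hχω, hfω]; ring
  have hχN : ∀ ω ∈ N, χ ω = f ω := by
    intro ω hω
    have hSneg : S ω < 0 := hω
    rcases hyval ω with h1 | h1
    · have hmem : ω ∈ A := show y ω * S ω ≤ 0 by rw [h1, one_mul]; exact hSneg.le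
      have hfω : f ω = 1 := Set.indicator_of_mem (show ω ∈ {ω' | y ω' = 1} from h1) _
      have hχω : χ ω = 1 := Set.indicator_of_mem hmem _
      rw [hχω, hfω]
    · have hyne : y ω ≠ 1 := by rw [h1]; norm_num
      have hnot : ω ∉ A := by
        intro hmem
        have hmem' : y ω * S ω ≤ 0 := hmem
        rw [h1] at hmem'
        nlinarith
      have hfω : f ω = 0 := Set.indicator_of_notMem (show ω ∉ {ω' | y ω' = 1} from hyne) _
      have hχω : χ ω = 0 := Set.indicator_of_notMem hnot _
      rw [hχω, hfω]
  have hχZ : ∀ ω ∈ Z0, χ ω = 1 := by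
    intro ω hω
    have hmem : ω ∈ A := show y ω * S ω ≤ 0 by rw [show S ω = 0 from hω, mul_zero]
    exact Set.indicator_of_mem hmem _
  -- piecewise integral inequalities
  have hPle : ∫ ω in P, g ω ∂ℙ ≤ ∫ ω in P, χ ω ∂ℙ := by
    have e1 : ∫ ω in P, χ ω ∂ℙ = ∫ ω in P, (1 - f ω) ∂ℙ :=
      setIntegral_congr_fun hP hχP
    have e2 : ∫ ω in P, (1 - f ω) ∂ℙ = ∫ ω in P, (1 - Φt ω) ∂ℙ := by
      rw [integral_sub (integrable_const 1).integrableOn hf_int.integrableOn,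
        integral_sub (integrable_const 1).integrableOn hΦt_int.integrableOn, key P hP_m]
    rw [e1, e2]
    refine setIntegral_mono_on hg_int.integrableOn
      ((integrable_const 1).integrableOn.sub hΦt_int.integrableOn) hP fun ω _ => ?_
    have h1 : Phi (-|t ω|) ≤ Phi (-(t ω)) := Phi_mono (neg_le_neg (le_abs_self _))
    have h2 := Phi_neg (t ω)
    show Phi (-|t ω|) ≤ 1 - Phi (t ω)
    linarith
  have hNle : ∫ ω in N, g ω ∂ℙ ≤ ∫ ω in N, χ ω ∂ℙ := by
    have e1 : ∫ ω in N, χ ω ∂ℙ = ∫ ω in N, f ω ∂ℙ := setIntegral_congr_fun hN hχN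
    rw [e1, key N hN_m]
    refine setIntegral_mono_on hg_int.integrableOn hΦt_int.integrableOn hN fun ω _ => ?_
    exact Phi_mono (neg_abs_le _)
  have hZle : ∫ ω in Z0, g ω ∂ℙ ≤ ∫ ω in Z0, χ ω ∂ℙ := by
    have e1 : ∫ ω in Z0, χ ω ∂ℙ = ∫ ω in Z0, (1:ℝ) ∂ℙ := setIntegral_congr_fun hZ0 hχZ
    rw [e1]
    refine setIntegral_mono_on hg_int.integrableOn (integrable_const 1).integrableOn hZ0
      fun ω _ => Phi_le_one _
  -- decompose total integrals
  have hPc : Pᶜ = N ∪ Z0 := by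
    ext ω
    simp only [hP_def, hN_def, hZ0_def, Set.mem_compl_iff, Set.mem_setOf_eq, Set.mem_union,
      not_lt]
    constructor
    · intro h; exact h.lt_or_eq
    · rintro (h | h); exacts [h.le, h.le]
  have hdisj : Disjoint N Z0 := by
    rw [Set.disjoint_left]
    intro ω hω1 hω2
    exact absurd (hω2 : S ω = 0) (ne_of_lt hω1)
  have split : ∀ (h : Ω → ℝ), Integrable h ℙ →
      ∫ ω, h ω ∂ℙ = (∫ ω in P, h ω ∂ℙ) + (∫ ω in N, h ω ∂ℙ) + (∫ ω in Z0, h ω ∂ℙ) := by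
    intro h hint
    rw [← integral_add_compl hP hint, hPc,
      setIntegral_union hdisj hZ0 hint.integrableOn hint.integrableOn]
    ring
  have final : ∫ ω, g ω ∂ℙ ≤ ∫ ω, χ ω ∂ℙ := by
    rw [split g hg_int, split χ hχ_int]
    gcongr
  have lhs_eq : (ℙ A).toReal = ∫ ω, χ ω ∂ℙ := (integral_indicator_one hA).symm
  calc ∫ ω, Phi (-|β0 + γ0 * x ω ⟨0, hd⟩|) ∂ℙ = ∫ ω, g ω ∂ℙ := rfl
    _ ≤ ∫ ω, χ ω ∂ℙ := final
    _ = (ℙ A).toReal := lhs_eq.symm
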